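/- Define the passivity-violating example: let c_L(α) = sin α and c_D(α) = c₀ + 1 − cos α with c₀ > 0. Then (a) c_D(α) > 0 for all α, (b) the aerodynamic force F_a = k_a|v_a|(c_L(α) S v_a − c_D(α) v_a) satisfies the passivity inequality v_aᵀ F_a ≤ 0 for all v_a ∈ R² and α ∈ R (with k_a > 0), and (c) c_L(0) = c_L(π) = 0. -/

import Mathlib

open Real Matrix

/-- Rotation by π/2. -/
noncomputable def Srot : Matrix (Fin 2) (Fin 2) ℝ := !![0, -1; 1, 0]

/-- The counterexample coefficients of Lemma 1: `c_L(α) = sin α`,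
`c_D(α) = c₀ + 1 − cos α` with `c₀ > 0` give positive drag, a passive
aerodynamic force, and zero lift at `α = 0, π`. -/
theorem passivity_counterexample_coefficients (c₀ : ℝ) (hc₀ : 0 < c₀)
    (kₐ : ℝ) (hk : 0 < kₐ) :
    let cL : ℝ → ℝ := fun α => sin α
    let cD : ℝ → ℝ := fun α => c₀ + 1 - cos α
    (∀ α, 0 < cD α) ∧
    (∀ (vₐ : Fin 2 → ℝ) (α : ℝ),
      vₐ ⬝ᵥ ((kₐ * Real.sqrt (vₐ ⬝ᵥ vₐ)) •
        (cL α • Srot.mulVec vₐ - cD α • vₐ)) ≤ 0) ∧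
    cL 0 = 0 ∧ cL π = 0 := by
  intro cL cD
  refine ⟨fun α => by have := cos_le_one α; simp [cD]; linarith, ?_, by simp [cL], by simp [cL]⟩
  intro v α
  have hvv : (0:ℝ) ≤ v ⬝ᵥ v := by
    have := sq_nonneg (v 0); have := sq_nonneg (v 1); simp [dotProduct, Fin.sum_univ_two]; nlinarith
  have hS : v ⬝ᵥ (Srot.mulVec v) = 0 := by
    simp [Srot, dotProduct, mulVec, Fin.sum_univ_two]; ring
  have hexp : v ⬝ᵥ ((kₐ * Real.sqrt (v ⬝ᵥ v)) •
        (cL α • Srot.mulVec v - cD α • v))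
      = (kₐ * Real.sqrt (v ⬝ᵥ v)) * (cL α * (v ⬝ᵥ Srot.mulVec v) - cD α * (v ⬝ᵥ v)) := by
    simp only [dotProduct_smul, dotProduct_sub, smul_eq_mul]
  rw [hexp, hS]
  have hcD : 0 < cD α := by have := cos_le_one α; simp [cD]; linarith
  have h1 : 0 ≤ kₐ * Real.sqrt (v ⬝ᵥ v) := by positivity
  nlinarith [mul_nonneg h1 (mul_nonneg hcD.le hvv)]
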